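/- Let p ≥ 3 be prime, 0 < x < p an integer, and define S_k(x, p^r) = Σ 1/i^k over integers 0 < i < p^r with i ≡ x (mod p). Then S_k(x, p²) ≡ p·S_k(x, p) (mod p²), and for every r ≥ 2 and k ≥ 1, S_k(x, p^{r+1}) ≡ p·S_k(x, p^r) (mod p^{r+2}). -/

import Mathlib

open Finset

/-- `S p k x R = ∑_{0 < i < R, i ≡ x (mod p)} 1/i^k`. -/
def S (p k x R : ℕ) : ℚ :=
  ∑ i ∈ (Finset.Ioo 0 R).filter (fun i => i % p = x % p), (1 : ℚ) / (i : ℚ)^k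

/-- `q` is divisible by `p^s` in the `p`-integral sense. -/
def Pdvd (p s : ℕ) (q : ℚ) : Prop :=
  ∃ a b : ℤ, ¬ (p:ℤ) ∣ b ∧ q * (b:ℚ) = (p:ℚ)^s * (a:ℚ)

namespace Pdvd

variable {p s s' : ℕ} {q q' : ℚ}

lemma prime_int (hp : p.Prime) : Prime (p:ℤ) := Nat.prime_iff_prime_int.mp hp

lemma zero (hp : p.Prime) : Pdvd p s 0 :=
  ⟨0, 1, by simpa using (prime_int hp).not_dvd_one, by simp⟩

lemma add (hp : p.Prime) (h1 : Pdvd p s q) (h2 : Pdvd p s q') : Pdvd p s (q + q') := by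
  obtain ⟨a1, b1, hb1, e1⟩ := h1
  obtain ⟨a2, b2, hb2, e2⟩ := h2
  refine ⟨a1 * b2 + a2 * b1, b1 * b2, fun h => ?_, ?_⟩
  · rcases (prime_int hp).dvd_mul.mp h with h | h
    · exact hb1 h
    · exact hb2 h
  · push_cast
    linear_combination (b2:ℚ) * e1 + (b1:ℚ) * e2

lemma neg (h : Pdvd p s q) : Pdvd p s (-q) := by
  obtain ⟨a, b, hb, e⟩ := h
  exact ⟨-a, b, hb, by push_cast; linear_combination -e⟩

lemma sub (hp : p.Prime) (h1 : Pdvd p s q) (h2 : Pdvd p s q') : Pdvd p s (q - q') := by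
  simpa [sub_eq_add_neg] using h1.add hp h2.neg

lemma sum (hp : p.Prime) {ι : Type*} (t : Finset ι) (f : ι → ℚ)
    (h : ∀ i ∈ t, Pdvd p s (f i)) : Pdvd p s (∑ i ∈ t, f i) :=
  Finset.sum_induction f _ (fun _ _ => add hp) (zero hp) h

lemma mono (h : s' ≤ s) (hq : Pdvd p s q) : Pdvd p s' q := by
  obtain ⟨a, b, hb, e⟩ := hq
  refine ⟨(p:ℤ)^(s - s') * a, b, hb, ?_⟩
  push_cast
  rw [e, ← mul_assoc, ← pow_add]
  congr 2
  omega

lemma mul (hp : p.Prime) (h1 : Pdvd p s q) (h2 : Pdvd p s' q') :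
    Pdvd p (s + s') (q * q') := by
  obtain ⟨a1, b1, hb1, e1⟩ := h1
  obtain ⟨a2, b2, hb2, e2⟩ := h2
  refine ⟨a1 * a2, b1 * b2, fun h => ?_, ?_⟩
  · rcases (prime_int hp).dvd_mul.mp h with h | h
    · exact hb1 h
    · exact hb2 h
  · push_cast
    rw [pow_add]
    linear_combination (q' * (b2:ℚ)) * e1 + ((p:ℚ)^s * (a1:ℚ)) * e2

lemma of_int (hp : p.Prime) (d : ℤ) (h : (p:ℤ)^s ∣ d) : Pdvd p s (d:ℚ) := by
  obtain ⟨c, rfl⟩ := h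
  exact ⟨c, 1, by simpa using (prime_int hp).not_dvd_one, by push_cast; ring⟩

lemma num (hp : p.Prime) (h : Pdvd p s q) : (p:ℤ)^s ∣ q.num := by
  obtain ⟨a, b, hb, e⟩ := h
  have hden : (q.den : ℚ) ≠ 0 := by exact_mod_cast q.den_pos.ne'
  have hnum : (q.num : ℚ) = q * (q.den : ℚ) := (div_eq_iff hden).mp (Rat.num_div_den q)
  have h2 : ((q.num * b : ℤ) : ℚ) = (((p:ℤ)^s * (a * q.den) : ℤ) : ℚ) := by
    push_cast
    rw [hnum]
    linear_combination (q.den : ℚ) * e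
  have h3 : q.num * b = (p:ℤ)^s * (a * q.den) := by exact_mod_cast h2
  exact (prime_int hp).pow_dvd_of_dvd_mul_right s hb ⟨a * q.den, h3⟩

end Pdvd

lemma binom_lin (a u : ℤ) : ∀ k : ℕ, ∃ C : ℤ, (a+u)^(k+1) = a^(k+1) + (k+1)*a^k*u + u^2*C := by
  intro k
  induction k with
  | zero => exact ⟨0, by ring⟩
  | succ n ih =>
    obtain ⟨C, hC⟩ := ih
    refine ⟨a*C + (n+1)*a^n + u*C, ?_⟩
    push_cast at hC ⊢
    linear_combination (a + u) * hC

lemma filter_eq_image (p x m : ℕ) (hx : 0 < x) (hxp : x < p) :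
    (Finset.Ioo 0 (p*m)).filter (fun i => i % p = x % p)
      = (Finset.range m).image (fun j => x + j * p) := by
  have hxm : x % p = x := Nat.mod_eq_of_lt hxp
  ext i
  simp only [mem_filter, mem_Ioo, mem_image, mem_range]
  constructor
  · rintro ⟨⟨hi0, him⟩, hmod⟩
    refine ⟨i / p, ?_, ?_⟩
    · rw [Nat.div_lt_iff_lt_mul (by omega : 0 < p), Nat.mul_comm]
      omega
    · have h1 : p * (i/p) + i % p = i := Nat.div_add_mod i p
      rw [hmod, hxm, Nat.mul_comm] at h1
      omega
  · rintro ⟨j, hj, rfl⟩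
    refine ⟨⟨by omega, ?_⟩, by simp [Nat.add_mul_mod_self_right, hxm]⟩
    have h2 : (j+1) * p ≤ m * p := Nat.mul_le_mul_right p hj
    nlinarith

lemma S_eq (p k x m : ℕ) (hx : 0 < x) (hxp : x < p) :
    S p k x (p*m) = ∑ j ∈ range m, (1:ℚ)/((x:ℚ)+j*p)^k := by
  rw [S, filter_eq_image p x m hx hxp, Finset.sum_image]
  · exact Finset.sum_congr rfl (fun j _ => by push_cast; ring_nf)
  · intro a _ b _ h
    have h2 : x + a*p = x + b*p := h
    exact Nat.eq_of_mul_eq_mul_right (show 0 < p by omega) (by omega)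

lemma sum_range_mul' {M : Type*} [AddCommMonoid M] (f : ℕ → M) (m : ℕ) :
    ∀ n : ℕ, ∑ j ∈ range (m*n), f j = ∑ t ∈ range n, ∑ j ∈ range m, f (j + t*m) := by
  intro n
  induction n with
  | zero => simp
  | succ n ih =>
    rw [Nat.mul_succ, Finset.sum_range_add, ih, Finset.sum_range_succ]
    congr 1
    exact Finset.sum_congr rfl (fun j _ => by rw [Nat.add_comm, Nat.mul_comm])

lemma not_dvd_base (p x j : ℕ) (hp : p.Prime) (hx : 0 < x) (hxp : x < p) :
    ¬ (p:ℤ) ∣ ((x:ℤ) + j*p) := by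
  intro h
  have h1 : (p:ℤ) ∣ ((j:ℤ)*p) := dvd_mul_left _ _
  have h2 : (p:ℤ) ∣ (x:ℤ) := by simpa using h.sub h1
  have h3 : (p:ℤ) ≤ (x:ℤ) := Int.le_of_dvd (by exact_mod_cast hx) h2
  omega

lemma Tlemma (p x K e m : ℕ) (hp : p.Prime) (hx : 0 < x) (hxp : x < p)
    (he : e ≤ 1) (hm : (p:ℤ)^e ∣ (m:ℤ)) :
    Pdvd p e (∑ j ∈ range m, (1:ℚ)/((x:ℚ)+j*p)^K) := by
  have hx0 : (0:ℚ) < (x:ℚ) := by exact_mod_cast hx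
  have hnx : ¬ (p:ℤ) ∣ ((x:ℤ))^K := by
    intro h
    rcases K with _ | K
    · simp at h
      have := Int.le_of_dvd one_pos h; omega
    · have h2 := (Pdvd.prime_int hp).dvd_of_dvd_pow h
      have h3 : (p:ℤ) ≤ (x:ℤ) := Int.le_of_dvd (by exact_mod_cast hx) h2
      omega
  have key : ∀ j : ℕ, (1:ℚ)/((x:ℚ)+j*p)^K
      = ((((x:ℤ)^K - ((x:ℤ)+j*p)^K) : ℤ):ℚ)/(((((x:ℤ)^K*((x:ℤ)+j*p)^K)) : ℤ):ℚ) + 1/(x:ℚ)^K := by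
    intro j
    have hjp : (0:ℚ) ≤ (j:ℚ)*p := by positivity
    have hY : (0:ℚ) < ((x:ℚ)+j*p) := by linarith
    push_cast
    field_simp
    ring
  have hsum : (∑ j ∈ range m, (1:ℚ)/((x:ℚ)+j*p)^K)
      = (∑ j ∈ range m,
          ((((x:ℤ)^K - ((x:ℤ)+j*p)^K) : ℤ):ℚ)/(((((x:ℤ)^K*((x:ℤ)+j*p)^K)) : ℤ):ℚ))
        + (m:ℚ) * (1/(x:ℚ)^K) := by
    rw [Finset.sum_congr rfl (fun j _ => key j), Finset.sum_add_distrib,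
      Finset.sum_const, card_range, nsmul_eq_mul]
  rw [hsum]
  apply Pdvd.add hp
  · apply Pdvd.sum hp
    intro j _
    apply Pdvd.mono he
    have hpD : (p:ℤ) ∣ ((x:ℤ)^K - ((x:ℤ)+j*p)^K) := by
      have h1 : ((x:ℤ) - ((x:ℤ)+j*p)) ∣ ((x:ℤ)^K - ((x:ℤ)+j*p)^K) :=
        sub_dvd_pow_sub_pow _ _ K
      have h2 : (p:ℤ) ∣ ((x:ℤ) - ((x:ℤ)+j*p)) := ⟨-j, by ring⟩
      exact h2.trans h1
    obtain ⟨c, hc⟩ := hpD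
    refine ⟨c, (x:ℤ)^K*((x:ℤ)+j*p)^K, ?_, ?_⟩
    · intro h
      rcases (Pdvd.prime_int hp).dvd_mul.mp h with h | h
      · exact hnx h
      · exact not_dvd_base p x j hp hx hxp ((Pdvd.prime_int hp).dvd_of_dvd_pow h)
    · have hjp : (0:ℚ) ≤ (j:ℚ)*p := by positivity
      have hY : (0:ℚ) < ((x:ℚ)+j*p) := by linarith
      have hB : ((((x:ℤ)^K*((x:ℤ)+j*p)^K) : ℤ):ℚ) ≠ 0 := by
        push_cast
        positivity
      rw [div_mul_cancel₀ _ hB, hc]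
      push_cast
      ring
  · obtain ⟨c, hc⟩ := hm
    refine ⟨c, (x:ℤ)^K, hnx, ?_⟩
    have hxK : ((((x:ℤ)^K) : ℤ):ℚ) ≠ 0 := by push_cast; positivity
    push_cast at hxK ⊢
    field_simp
    exact_mod_cast hc

lemma Elem (p x k' r t j : ℕ) (hp : p.Prime) (hx : 0 < x) (hxp : x < p) (hr : 1 ≤ r) :
    Pdvd p (2*r) ((1:ℚ)/(((x:ℚ)+j*p)+t*(p:ℚ)^r)^(k'+1) - 1/((x:ℚ)+j*p)^(k'+1)
      + ((k':ℚ)+1)*((t:ℚ)*(p:ℚ)^r)/((x:ℚ)+j*p)^(k'+2)) := by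
  set Y : ℤ := (x:ℤ) + j*p with hYdef
  set U : ℤ := (t:ℤ)*(p:ℤ)^r with hUdef
  obtain ⟨C, hC⟩ := binom_lin Y U k'
  have hN : Y^(k'+2) - (Y+U)^(k'+1)*Y + ((k':ℤ)+1)*U*(Y+U)^(k'+1)
      = (p:ℤ)^(2*r) * ((t:ℤ)^2*(((k':ℤ)+1)^2*Y^k' + ((k':ℤ)+1)*U*C - C*Y)) := by
    have e2 : (p:ℤ)^(2*r) * (t:ℤ)^2 = U^2 := by rw [hUdef]; ring
    linear_combination (((k':ℤ)+1)*U - Y) * hC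
      + (((k':ℤ)+1)^2*Y^k' + ((k':ℤ)+1)*U*C - C*Y) * e2
  have hYq : ((Y:ℤ):ℚ) = (x:ℚ)+j*p := by rw [hYdef]; push_cast; ring
  have hUq : ((U:ℤ):ℚ) = (t:ℚ)*(p:ℚ)^r := by rw [hUdef]; push_cast; ring
  have hYd : ¬ (p:ℤ) ∣ Y := not_dvd_base p x j hp hx hxp
  have hYUd : ¬ (p:ℤ) ∣ (Y+U) := by
    intro h'
    apply hYd
    have hpU : (p:ℤ) ∣ U := ((dvd_pow_self (p:ℤ) (by omega : r ≠ 0))).mul_left _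
    simpa using h'.sub hpU
  refine ⟨(t:ℤ)^2*(((k':ℤ)+1)^2*Y^k' + ((k':ℤ)+1)*U*C - C*Y),
    (Y+U)^(k'+1) * Y^(k'+2), ?_, ?_⟩
  · intro h
    rcases (Pdvd.prime_int hp).dvd_mul.mp h with h | h
    · exact hYUd ((Pdvd.prime_int hp).dvd_of_dvd_pow h)
    · exact hYd ((Pdvd.prime_int hp).dvd_of_dvd_pow h)
  · have hx0 : (0:ℚ) < (x:ℚ) := by exact_mod_cast hx
    have hjp : (0:ℚ) ≤ (j:ℚ)*p := by positivity
    have htp : (0:ℚ) ≤ (t:ℚ)*(p:ℚ)^r := by positivity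
    have hY0 : ((Y:ℤ):ℚ) ≠ 0 := by rw [hYq]; linarith
    have hB0 : (((Y+U):ℤ):ℚ) ≠ 0 := by push_cast [hYq, hUq]; push_cast; linarith
    have key2 : ((Y:ℚ))^(k'+2) - (((Y:ℚ))+((U:ℚ)))^(k'+1)*((Y:ℚ))
        + ((k':ℚ)+1)*((U:ℚ))*(((Y:ℚ))+((U:ℚ)))^(k'+1)
        = (p:ℚ)^(2*r) * ((t:ℚ)^2*(((k':ℚ)+1)^2*((Y:ℚ))^k' + ((k':ℚ)+1)*((U:ℚ))*((C:ℚ))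
          - ((C:ℚ))*((Y:ℚ)))) := by
      exact_mod_cast congrArg (Int.cast : ℤ → ℚ) hN
    rw [← hYq, ← hUq]
    push_cast
    push_cast at hB0
    calc ((1:ℚ)/(((Y:ℚ))+((U:ℚ)))^(k'+1) - 1/((Y:ℚ))^(k'+1)
          + ((k':ℚ)+1)*((U:ℚ))/((Y:ℚ))^(k'+2)) * ((((Y:ℚ))+((U:ℚ)))^(k'+1) * ((Y:ℚ))^(k'+2))
        = ((Y:ℚ))^(k'+2) - (((Y:ℚ))+((U:ℚ)))^(k'+1)*((Y:ℚ))
          + ((k':ℚ)+1)*((U:ℚ))*(((Y:ℚ))+((U:ℚ)))^(k'+1) := by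
          field_simp
          ring
      _ = _ := by rw [key2]

lemma keylemma (p x k : ℕ) (hp : p.Prime) (hp3 : 3 ≤ p) (hx : 0 < x) (hxp : x < p)
    (hk : 1 ≤ k) (r e : ℕ) (hr : 1 ≤ r) (he : e ≤ 1) (her : e < r) :
    Pdvd p (r+1+e) (S p k x (p^(r+1)) - (p:ℚ) * S p k x (p^r)) := by
  obtain ⟨k', rfl⟩ : ∃ k', k = k'+1 := ⟨k-1, by omega⟩
  obtain ⟨r', rfl⟩ : ∃ r', r = r'+1 := ⟨r-1, by omega⟩
  set m := p^r' with hm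
  have h1 : p^(r'+1+1) = p * (m*p) := by rw [hm]; ring
  have h2 : p^(r'+1) = p * m := by rw [hm]; ring
  have main : S p (k'+1) x (p^(r'+1+1)) - (p:ℚ) * S p (k'+1) x (p^(r'+1))
      = (∑ t ∈ range p, ∑ j ∈ range m,
          ((1:ℚ)/(((x:ℚ)+j*p)+t*(p:ℚ)^(r'+1))^(k'+1) - 1/((x:ℚ)+j*p)^(k'+1)
            + ((k':ℚ)+1)*((t:ℚ)*(p:ℚ)^(r'+1))/((x:ℚ)+j*p)^(k'+2)))
        - (((k':ℚ)+1)*(p:ℚ)^(r'+1))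
          * ((∑ t ∈ range p, (t:ℚ)) * (∑ j ∈ range m, (1:ℚ)/((x:ℚ)+j*p)^(k'+2))) := by
    rw [h1, h2, S_eq _ _ _ _ hx hxp, S_eq _ _ _ _ hx hxp,
      sum_range_mul' (fun j => (1:ℚ)/((x:ℚ)+j*p)^(k'+1)) m p]
    have h3 : (p:ℚ) * (∑ j ∈ range m, (1:ℚ)/((x:ℚ)+j*p)^(k'+1))
        = ∑ t ∈ range p, ∑ j ∈ range m, (1:ℚ)/((x:ℚ)+j*p)^(k'+1) := by
      rw [Finset.sum_const, card_range, nsmul_eq_mul]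
    rw [h3, Finset.sum_mul_sum, Finset.mul_sum]
    simp only [Finset.mul_sum]
    simp only [← Finset.sum_sub_distrib]
    refine Finset.sum_congr rfl (fun t _ => Finset.sum_congr rfl (fun j _ => ?_))
    have hc : (x:ℚ)+(↑(j+t*m))*p = ((x:ℚ)+j*p)+t*(p:ℚ)^(r'+1) := by
      push_cast [hm]
      ring
    rw [hc]
    ring
  rw [main]
  apply Pdvd.sub hp
  · apply Pdvd.mono (show r'+1+1+e ≤ 2*(r'+1) by omega)
    apply Pdvd.sum hp
    intro t _
    apply Pdvd.sum hp
    intro j _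
    exact Elem p x k' (r'+1) t j hp hx hxp (by omega)
  · have hgauss : (∑ t ∈ range p, (t:ℚ)) = ((∑ t ∈ range p, t : ℕ) : ℚ) := by
      push_cast
      rfl
    rw [hgauss]
    set c : ℕ := ∑ t ∈ range p, t with hcdef
    have h2c : c * 2 = p * (p-1) := Finset.sum_range_id_mul_two p
    have hpc : p ∣ c := by
      have hd : p ∣ c * 2 := ⟨p-1, h2c⟩
      rcases (Nat.Prime.dvd_mul hp).mp hd with h | h
      · exact h
      · exfalso
        have := Nat.le_of_dvd (by omega) h
        omega
    have hrw : (((k':ℚ)+1)*(p:ℚ)^(r'+1)) * ((c:ℚ) * (∑ j ∈ range m, (1:ℚ)/((x:ℚ)+j*p)^(k'+2)))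
        = ((((k'+1) * p^(r'+1) * c : ℕ) : ℤ):ℚ) * (∑ j ∈ range m, (1:ℚ)/((x:ℚ)+j*p)^(k'+2)) := by
      push_cast
      ring
    rw [hrw]
    have hdvd : (p:ℤ)^(r'+2) ∣ (((k'+1) * p^(r'+1) * c : ℕ) : ℤ) := by
      obtain ⟨d, hd⟩ := hpc
      exact_mod_cast Int.natCast_dvd_natCast.mpr
        (⟨(k'+1)*d, by rw [hd]; ring⟩ : p^(r'+2) ∣ (k'+1) * p^(r'+1) * c)
    have hme : (p:ℤ)^e ∣ (m:ℤ) := by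
      rw [hm]
      exact_mod_cast Int.natCast_dvd_natCast.mpr (pow_dvd_pow p (by omega : e ≤ r'))
    show Pdvd p ((r'+2)+e) _
    exact Pdvd.mul hp (Pdvd.of_int hp _ hdvd) (Tlemma p x (k'+2) e m hp hx hxp he hme)

theorem stmt7 (p x k : ℕ) (hp : p.Prime) (hp3 : 3 ≤ p) (hx : 0 < x) (hxp : x < p)
    (hk : 1 ≤ k) :
    ((p : ℤ)^2 ∣ (S p k x (p^2) - p * S p k x p).num) ∧
    (∀ r : ℕ, 2 ≤ r → (p : ℤ)^(r+2) ∣ (S p k x (p^(r+1)) - p * S p k x (p^r)).num) := by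
  constructor
  · have h := (keylemma p x k hp hp3 hx hxp hk 1 0 le_rfl (by omega) (by omega)).num hp
    simpa [pow_one] using h
  · intro r hr
    have h := (keylemma p x k hp hp3 hx hxp hk r 1 (by omega) le_rfl (by omega)).num hp
    have : r + 1 + 1 = r + 2 := by omega
    rwa [this] at h
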